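/- Let h : [0, ∞) → ℝ be nondecreasing and concave with h(0) = 0, and suppose that for every x ≥ 0 the map y ↦ y·h(x/y) is nondecreasing in y on (0, ∞). Let m > 0 and cmax > 0, and let (c_i), (k_i), (Δ_i), indexed by a finite set I, satisfy 0 < c_i ≤ cmax, k_i ≥ 0, and for each i either Δ_i = 0 or Δ_i ≥ m. Then ∑_{i∈I} c_i·( h((k_i + Δ_i)/c_i) − h(k_i/c_i) ) ≤ (∑_{i∈I} Δ_i / m) · cmax · h(m/cmax). -/

import Mathlib

open Finset

/-- Bound on the potential increase when a function arrives, for a general concave,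
nondecreasing `h` with `h(0) = 0` such that `y ↦ y·h(x/y)` is nondecreasing:
`∑ c_i (h((k_i + Δ_i)/c_i) − h(k_i/c_i)) ≤ (∑ Δ_i / m) · cmax · h(m/cmax)`. -/
theorem potential_increase_bound (h : ℝ → ℝ)
    (hmono : ∀ x y : ℝ, 0 ≤ x → x ≤ y → h x ≤ h y)
    (hconc : ConcaveOn ℝ (Set.Ici 0) h)
    (h0 : h 0 = 0)
    (hscale : ∀ x : ℝ, 0 ≤ x → ∀ y z : ℝ, 0 < y → y ≤ z → y * h (x / y) ≤ z * h (x / z))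
    (m cmax : ℝ) (hm : 0 < m) (hcmax : 0 < cmax)
    {ι : Type*} (I : Finset ι) (c k Δ : ι → ℝ)
    (hc : ∀ i ∈ I, 0 < c i ∧ c i ≤ cmax)
    (hk : ∀ i ∈ I, 0 ≤ k i)
    (hΔ : ∀ i ∈ I, Δ i = 0 ∨ m ≤ Δ i) :
    ∑ i ∈ I, c i * (h ((k i + Δ i) / c i) - h (k i / c i))
      ≤ (∑ i ∈ I, Δ i) / m * cmax * h (m / cmax) := by
  -- key concavity fact: for 0 ≤ s ≤ t, 0 < t : (s/t) * h t ≤ h s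
  have key : ∀ s t : ℝ, 0 ≤ s → s ≤ t → 0 < t → s / t * h t ≤ h s := by
    intro s t hs hst ht
    rcases eq_or_lt_of_le hs with rfl | hs'
    · simp [h0]
    · have h1 : s / t ≤ 1 := (div_le_one ht).2 hst
      have := hconc.2 (Set.mem_Ici.2 ht.le) (Set.mem_Ici.2 (le_refl (0:ℝ)))
        (div_nonneg hs ht.le) (by linarith : (0:ℝ) ≤ 1 - s / t) (by ring)
      simpa [smul_eq_mul, h0, div_mul_cancel₀ _ ht.ne'] using this
  have ratio : ∀ s t : ℝ, 0 < s → s ≤ t → h t ≤ t / s * h s := by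
    intro s t hs hst
    have ht : 0 < t := hs.trans_le hst
    have hk' := key s t hs.le hst ht
    have : t / s * (s / t * h t) ≤ t / s * h s :=
      mul_le_mul_of_nonneg_left hk' (by positivity)
    calc h t = t / s * (s / t * h t) := by field_simp
    _ ≤ t / s * h s := this
  have subadd : ∀ a b : ℝ, 0 ≤ a → 0 ≤ b → h (a + b) - h a ≤ h b := by
    intro a b ha hb
    rcases eq_or_lt_of_le (add_nonneg ha hb) with h' | ht
    · have ha0 : a = 0 := by linarith
      have hb0 : b = 0 := by linarith
      simp [ha0, hb0, h0]
    · have h1 := key a (a + b) ha (by linarith) ht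
      have h2 := key b (a + b) hb (by linarith) ht
      have : (a / (a + b) + b / (a + b)) * h (a + b) ≤ h a + h b := by
        rw [add_mul]; exact add_le_add h1 h2
      rw [← add_div, div_self ht.ne', one_mul] at this
      linarith
  have hterm : ∀ i ∈ I, c i * (h ((k i + Δ i) / c i) - h (k i / c i))
      ≤ Δ i / m * cmax * h (m / cmax) := by
    intro i hi
    obtain ⟨hci, hcc⟩ := hc i hi
    have hki := hk i hi
    rcases hΔ i hi with hΔ0 | hΔm
    · simp [hΔ0]
    · have hΔpos : 0 < Δ i := hm.trans_le hΔm
      have step1 : h ((k i + Δ i) / c i) - h (k i / c i) ≤ h (Δ i / c i) := by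
        have := subadd (k i / c i) (Δ i / c i) (by positivity) (by positivity)
        rwa [← add_div] at this
      have step2 : c i * h (Δ i / c i) ≤ cmax * h (Δ i / cmax) :=
        hscale (Δ i) hΔpos.le (c i) cmax hci hcc
      have step3 : h (Δ i / cmax) ≤ Δ i / m * h (m / cmax) := by
        have hr := ratio (m / cmax) (Δ i / cmax) (by positivity) (by gcongr)
        have heq : (Δ i / cmax) / (m / cmax) = Δ i / m := by
          field_simp
        rwa [heq] at hr
      calc c i * (h ((k i + Δ i) / c i) - h (k i / c i))
          ≤ c i * h (Δ i / c i) := mul_le_mul_of_nonneg_left step1 hci.le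
        _ ≤ cmax * h (Δ i / cmax) := step2
        _ ≤ cmax * (Δ i / m * h (m / cmax)) :=
            mul_le_mul_of_nonneg_left step3 hcmax.le
        _ = Δ i / m * cmax * h (m / cmax) := by ring
  calc ∑ i ∈ I, c i * (h ((k i + Δ i) / c i) - h (k i / c i))
      ≤ ∑ i ∈ I, Δ i / m * cmax * h (m / cmax) := Finset.sum_le_sum hterm
    _ = (∑ i ∈ I, Δ i) / m * cmax * h (m / cmax) := by
        rw [Finset.sum_congr rfl (fun i _ => by ring :
          ∀ i ∈ I, Δ i / m * cmax * h (m / cmax) = Δ i * (1 / m * cmax * h (m / cmax))),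
          ← Finset.sum_mul]
        ring
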